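/- Let T ⊆ ℝ³ be a nonempty bounded open connected set and let ℓ ≥ 0 be an integer. For every vector field u of the form u = curl w₀ with w₀ ∈ P^ℓ(ℝ³)³, there exists a unique vector field v ∈ P^ℓ(ℝ³)³ such that curl v = u (as functions on ℝ³) and ∫_T v · (grad q) dx = 0 for every q ∈ P^{ℓ+1}(ℝ³). In other words, the curl restricted to the L²(T)-orthogonal complement in P^ℓ(ℝ³)³ of the space {grad q : q ∈ P^{ℓ+1}(ℝ³)} is a linear isomorphism onto the space {curl w : w ∈ P^ℓ(ℝ³)³}. -/

import Mathlib

set_option maxHeartbeats 1000000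
open MvPolynomial MeasureTheory

/-- The curl of a polynomial vector field on `ℝ³`, as a polynomial vector field. -/
noncomputable def pcurl3 (w : Fin 3 → MvPolynomial (Fin 3) ℝ) : Fin 3 → MvPolynomial (Fin 3) ℝ :=
  ![pderiv 1 (w 2) - pderiv 2 (w 1),
    pderiv 2 (w 0) - pderiv 0 (w 2),
    pderiv 0 (w 1) - pderiv 1 (w 0)]

abbrev P3 := MvPolynomial (Fin 3) ℝ

abbrev E3 (ℓ : ℕ) := Fin 3 → (restrictTotalDegree (Fin 3) ℝ ℓ)

lemma coeff_pderiv' {σ : Type*} [DecidableEq σ] (p : MvPolynomial σ ℝ) (j : σ) (m : σ →₀ ℕ) :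
    coeff m (pderiv j p) = ((m j : ℝ) + 1) * coeff (m + Finsupp.single j 1) p := by
  induction p using MvPolynomial.induction_on' with
  | monomial n a =>
    rw [pderiv_monomial, coeff_monomial, coeff_monomial]
    by_cases h : n = m + Finsupp.single j 1
    · subst h
      have h1 : m + Finsupp.single j 1 - Finsupp.single j 1 = m := by
        ext k; simp [Finsupp.tsub_apply, Finsupp.single_apply]
      rw [if_pos h1]
      simp [Finsupp.add_apply, Finsupp.single_eq_same]
      push_cast; ring
    · rw [if_neg h]
      by_cases h2 : n - Finsupp.single j 1 = m
      · rw [if_pos h2]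
        have hnj : n j = 0 := by
          by_contra hc
          apply h
          rw [← h2]
          ext k
          simp only [Finsupp.add_apply, Finsupp.tsub_apply, Finsupp.single_apply]
          rcases eq_or_ne k j with rfl | hk
          · simp; omega
          · simp [Ne.symm hk]
        simp [hnj]
      · rw [if_neg h2, mul_zero]
  | add p q hp hq =>
    rw [map_add, coeff_add, coeff_add, hp, hq]; ring

lemma totalDegree_pderiv_le (p : MvPolynomial (Fin 3) ℝ) (i : Fin 3) (n : ℕ)
    (h : p.totalDegree ≤ n + 1) : (pderiv i p).totalDegree ≤ n := by
  apply Finset.sup_le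
  intro m hm
  rw [MvPolynomial.mem_support_iff] at hm
  rw [coeff_pderiv'] at hm
  have h2 : coeff (m + Finsupp.single i 1) p ≠ 0 := by
    intro h0; rw [h0, mul_zero] at hm; exact hm rfl
  have h3 := MvPolynomial.le_totalDegree (MvPolynomial.mem_support_iff.2 h2)
  have h4 : (m + Finsupp.single i 1).sum (fun _ e => e) = m.sum (fun _ e => e) + 1 := by
    rw [Finsupp.sum_add_index' (fun _ => rfl) (fun _ _ _ => rfl),
      Finsupp.sum_single_index rfl]
  omega

lemma pderiv_comm' (p : MvPolynomial (Fin 3) ℝ) (i j : Fin 3) :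
    pderiv i (pderiv j p) = pderiv j (pderiv i p) := by
  ext m
  rw [coeff_pderiv', coeff_pderiv', coeff_pderiv', coeff_pderiv']
  have h1 : m + Finsupp.single i 1 + Finsupp.single j 1 = m + Finsupp.single j 1 + Finsupp.single i 1 := by
    rw [add_assoc, add_assoc, add_comm (Finsupp.single i 1)]
  rw [h1]
  rcases eq_or_ne i j with rfl | hij
  · ring
  · simp only [Finsupp.add_apply, Finsupp.single_apply, if_neg hij, if_neg (Ne.symm hij)]
    push_cast; ring

noncomputable def antider (P : MvPolynomial (Fin 3) ℝ) : MvPolynomial (Fin 3) ℝ :=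
  ∑ m ∈ P.support, monomial m (coeff m P / (∑ i, m i : ℕ))

lemma coeff_antider (P : MvPolynomial (Fin 3) ℝ) (m : Fin 3 →₀ ℕ) :
    coeff m (antider P) = coeff m P / (∑ i, m i : ℕ) := by
  rw [antider, MvPolynomial.coeff_sum]
  simp_rw [coeff_monomial]
  rw [Finset.sum_ite_eq' P.support m (fun m' => coeff m' P / (∑ i, m' i : ℕ))]
  split_ifs with h
  · rfl
  · rw [MvPolynomial.notMem_support_iff.1 h, zero_div]


lemma poincare (ℓ : ℕ) (d : Fin 3 → MvPolynomial (Fin 3) ℝ)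
    (hdeg : ∀ i, (d i).totalDegree ≤ ℓ)
    (hcurl : ∀ i j, pderiv i (d j) = pderiv j (d i)) :
    ∃ q : MvPolynomial (Fin 3) ℝ, q.totalDegree ≤ ℓ + 1 ∧ ∀ j, pderiv j q = d j := by
  classical
  set P : MvPolynomial (Fin 3) ℝ := ∑ i, X i * d i with hP
  refine ⟨antider P, ?_, ?_⟩
  · -- degree bound
    have hPdeg : P.totalDegree ≤ ℓ + 1 := by
      refine (MvPolynomial.totalDegree_finset_sum _ _).trans ?_
      apply Finset.sup_le
      intro i _
      calc (X i * d i).totalDegree ≤ (X (R := ℝ) i).totalDegree + (d i).totalDegree :=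
            MvPolynomial.totalDegree_mul _ _
        _ ≤ ℓ + 1 := by
            have := MvPolynomial.totalDegree_X (R := ℝ) i
            have := hdeg i
            omega
    apply Finset.sup_le
    intro m hm
    rw [MvPolynomial.mem_support_iff, coeff_antider] at hm
    have : coeff m P ≠ 0 := by intro h0; rw [h0, zero_div] at hm; exact hm rfl
    exact le_trans (MvPolynomial.le_totalDegree (MvPolynomial.mem_support_iff.2 this)) hPdeg
  · intro j
    ext m
    rw [coeff_pderiv', coeff_antider]
    -- key identity
    have key : ((m j : ℝ) + 1) * coeff (m + Finsupp.single j 1) P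
        = (((∑ i, m i : ℕ) : ℝ) + 1) * coeff m (d j) := by
      rw [hP, MvPolynomial.coeff_sum, Finset.mul_sum]
      have step : ∀ i : Fin 3, ((m j : ℝ) + 1) * coeff (m + Finsupp.single j 1) (X i * d i)
          = (if i = j then ((m j : ℝ) + 1) else (m i : ℝ)) * coeff m (d j) := by
        intro i
        rcases eq_or_ne i j with rfl | hij
        · rw [if_pos rfl, add_comm m (Finsupp.single i 1), MvPolynomial.coeff_X_mul]
        · rw [if_neg hij, MvPolynomial.coeff_X_mul']
          by_cases hmi : m i = 0
          · rw [if_neg]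
            · rw [hmi]; push_cast; ring
            · simp only [Finsupp.mem_support_iff, Finsupp.add_apply, Finsupp.single_apply,
                if_neg (Ne.symm hij), ne_eq, not_not]
              omega
          · rw [if_pos]
            swap
            · simp only [Finsupp.mem_support_iff, Finsupp.add_apply, Finsupp.single_apply,
                if_neg (Ne.symm hij), ne_eq]
              omega
            set m' : Fin 3 →₀ ℕ := m - Finsupp.single i 1 with hm'
            have := congrArg (coeff m') (hcurl j i)
            rw [coeff_pderiv', coeff_pderiv'] at this
            have e1 : m' + Finsupp.single j 1 = (m + Finsupp.single j 1) - Finsupp.single i 1 := by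
              rw [hm']
              ext k
              simp only [Finsupp.add_apply, Finsupp.tsub_apply, Finsupp.single_apply]
              rcases eq_or_ne i k with rfl | h1
              · simp only [if_pos rfl, if_neg (Ne.symm hij)]
                omega
              · simp [h1]
            have e2 : m' + Finsupp.single i 1 = m := by
              rw [hm']
              ext k
              simp only [Finsupp.add_apply, Finsupp.tsub_apply, Finsupp.single_apply]
              rcases eq_or_ne i k with rfl | h1
              · simp; omega
              · simp [h1]
            have e3 : (m' j : ℕ) = m j := by
              rw [hm', Finsupp.tsub_apply, Finsupp.single_apply, if_neg hij, Nat.sub_zero]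
            have e4 : (m' i : ℕ) = m i - 1 := by
              rw [hm', Finsupp.tsub_apply, Finsupp.single_apply, if_pos rfl]
            rw [e1, e2, e3, e4] at this
            have e5 : (((m i - 1 : ℕ) : ℝ) + 1) = (m i : ℝ) := by
              have h1 : 1 ≤ m i := Nat.one_le_iff_ne_zero.2 hmi
              rw [Nat.cast_sub h1]; push_cast; ring
            rw [e5] at this
            rw [← e1, hm'] at this ⊢
            exact this
      rw [Finset.sum_congr rfl (fun i _ => step i), ← Finset.sum_mul]
      congr 1
      push_cast
      rw [Fin.sum_univ_three, Fin.sum_univ_three]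
      fin_cases j <;> simp <;> ring
    set mj : Fin 3 →₀ ℕ := m + Finsupp.single j 1 with hmj
    have hsum : ((∑ i, mj i : ℕ) : ℝ) = ((∑ i, m i : ℕ) : ℝ) + 1 := by
      rw [hmj]
      push_cast
      rw [Fin.sum_univ_three, Fin.sum_univ_three]
      simp only [Pi.add_apply, Finsupp.coe_add, Finsupp.single_apply]
      fin_cases j <;> simp <;> ring
    rw [hsum]
    have hne : ((∑ i, m i : ℕ) : ℝ) + 1 ≠ 0 := by positivity
    rw [mul_div_assoc']
    rw [div_eq_iff hne]
    rw [key]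
    ring

lemma integrableOn_evals (T : Set (Fin 3 → ℝ)) (hbdd : Bornology.IsBounded T)
    (f : (Fin 3 → ℝ) → ℝ) (hf : Continuous f) : IntegrableOn f T := by
  have hK : IsCompact (closure T) := hbdd.isCompact_closure
  exact (hf.continuousOn.integrableOn_compact hK).mono_set subset_closure

lemma poly_eq_zero_of_eqOn (T : Set (Fin 3 → ℝ)) (hne : T.Nonempty) (hopen : IsOpen T)
    (p : P3) (h : ∀ x ∈ T, eval x p = 0) : p = 0 := by
  obtain ⟨x₀, hx₀⟩ := hne
  have hA : AnalyticOnNhd ℝ (fun x : Fin 3 → ℝ => eval x p) Set.univ := by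
    have := AnalyticOnNhd.eval_continuousLinearMap
      (ContinuousLinearMap.id ℝ (Fin 3 → ℝ)) p
    simpa using this
  have hz : (fun x : Fin 3 → ℝ => eval x p) =ᶠ[nhds x₀] 0 := by
    filter_upwards [hopen.mem_nhds hx₀] with x hx
    exact h x hx
  have := hA.eqOn_zero_of_preconnected_of_eventuallyEq_zero isPreconnected_univ
    (Set.mem_univ x₀) hz
  apply MvPolynomial.funext (q := 0)
  intro x
  simpa using this (Set.mem_univ x)

lemma definite_aux (T : Set (Fin 3 → ℝ)) (hne : T.Nonempty) (hopen : IsOpen T)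
    (hbdd : Bornology.IsBounded T) (v : Fin 3 → P3)
    (h : (∫ x in T, ∑ i, eval x (v i) * eval x (v i)) = 0) : v = 0 := by
  set f : (Fin 3 → ℝ) → ℝ := fun x => ∑ i, eval x (v i) * eval x (v i) with hf
  have hfc : Continuous f := by
    apply continuous_finset_sum
    intro i _
    exact (MvPolynomial.continuous_eval _).mul (MvPolynomial.continuous_eval _)
  have hnn : 0 ≤ᵐ[volume.restrict T] f := by
    filter_upwards with x
    exact Finset.sum_nonneg fun i _ => mul_self_nonneg _
  have hint : IntegrableOn f T := integrableOn_evals T hbdd f hfc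
  have hzero : ∀ x ∈ T, f x = 0 := by
    intro x hx
    by_contra hc
    have hpos : 0 < f x := lt_of_le_of_ne (Finset.sum_nonneg fun i _ => mul_self_nonneg _)
      (Ne.symm hc)
    have hsupp : 0 < volume (Function.support f ∩ T) := by
      have hopen2 : IsOpen (Function.support f ∩ T) :=
        (hfc.isOpen_support).inter hopen
      exact IsOpen.measure_pos volume hopen2 ⟨x, by simp [Function.mem_support, hc], hx⟩
    have := (setIntegral_pos_iff_support_of_nonneg_ae hnn hint).2 hsupp
    rw [h] at this
    exact lt_irrefl 0 this
  funext i
  apply poly_eq_zero_of_eqOn T hne hopen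
  intro x hx
  have h0 : ∑ i, eval x (v i) * eval x (v i) = 0 := hzero x hx
  rw [Finset.sum_eq_zero_iff_of_nonneg (fun i _ => mul_self_nonneg (eval x (v i)))] at h0
  have h1 := h0 i (Finset.mem_univ i)
  nlinarith [h1]

lemma ortho_decomp {E : Type*} [AddCommGroup E] [Module ℝ E] [FiniteDimensional ℝ E]
    (core : InnerProductSpace.Core ℝ E) (G : Submodule ℝ E) (w : E) :
    ∃ y ∈ G, ∃ z, (∀ u ∈ G, core.inner u z = 0) ∧ w = y + z := by
  letI : NormedAddCommGroup E := core.toNormedAddCommGroup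
  letI : InnerProductSpace ℝ E := InnerProductSpace.ofCore core.toCore
  haveI : CompleteSpace E := FiniteDimensional.complete ℝ E
  haveI : CompleteSpace G := FiniteDimensional.complete ℝ G
  obtain ⟨y, hy, z, hz, h⟩ := G.exists_add_mem_mem_orthogonal w
  exact ⟨y, hy, z, fun u hu => (Submodule.mem_orthogonal G z).1 hz u hu, h⟩

lemma ortho_zero {E : Type*} [AddCommGroup E] [Module ℝ E]
    (core : InnerProductSpace.Core ℝ E) (G : Submodule ℝ E) (z : E)
    (hz : ∀ u ∈ G, core.inner u z = 0) (hzG : z ∈ G) : z = 0 :=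
  core.definite z (hz z hzG)

section Main

variable (T : Set (Fin 3 → ℝ))

noncomputable def Bform (v w : Fin 3 → P3) : ℝ :=
  ∫ x in T, ∑ i, eval x (v i) * eval x (w i)

lemma Bform_cont (v w : Fin 3 → P3) :
    Continuous (fun x : Fin 3 → ℝ => ∑ i, eval x (v i) * eval x (w i)) := by
  apply continuous_finset_sum
  intro i _
  exact (MvPolynomial.continuous_eval _).mul (MvPolynomial.continuous_eval _)

lemma Bform_symm (v w : Fin 3 → P3) : Bform T v w = Bform T w v := by
  unfold Bform
  congr 1
  funext x
  exact Finset.sum_congr rfl fun i _ => mul_comm _ _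

lemma Bform_add_left (hbdd : Bornology.IsBounded T) (v w u : Fin 3 → P3) :
    Bform T (v + w) u = Bform T v u + Bform T w u := by
  unfold Bform
  rw [← integral_add (integrableOn_evals T hbdd _ (Bform_cont v u))
    (integrableOn_evals T hbdd _ (Bform_cont w u))]
  congr 1
  funext x
  rw [← Finset.sum_add_distrib]
  refine Finset.sum_congr rfl fun i _ => ?_
  simp only [Pi.add_apply, map_add]
  ring

lemma Bform_smul_left (r : ℝ) (v u : Fin 3 → P3) :
    Bform T (r • v) u = r * Bform T v u := by
  unfold Bform
  rw [← integral_const_mul]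
  congr 1
  funext x
  rw [Finset.mul_sum]
  refine Finset.sum_congr rfl fun i _ => ?_
  rw [Pi.smul_apply, smul_eq_C_mul, eval_mul, eval_C]
  ring

lemma Bform_sub_right (hbdd : Bornology.IsBounded T) (u v w : Fin 3 → P3) :
    Bform T u (v - w) = Bform T u v - Bform T u w := by
  rw [Bform_symm T u (v - w), Bform_symm T u v, Bform_symm T u w]
  have h1 : v - w = v + (-1 : ℝ) • w := by
    funext i; simp [sub_eq_add_neg]
  rw [h1, Bform_add_left T hbdd, Bform_smul_left]
  ring

end Main

/-- On a nonempty bounded open connected `T ⊆ ℝ³`, for every `u = curl w₀`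
with `w₀ ∈ P^ℓ(ℝ³)³` there is a unique `v ∈ P^ℓ(ℝ³)³` with `curl v = u` as functions on `ℝ³`
and `v` `L²(T)`-orthogonal to `grad q` for all `q ∈ P^{ℓ+1}(ℝ³)`. -/
theorem curl_iso_grad_orthogonal_complement (T : Set (Fin 3 → ℝ)) (hne : T.Nonempty)
    (hopen : IsOpen T) (hbdd : Bornology.IsBounded T) (hconn : IsConnected T)
    (ℓ : ℕ) (u : Fin 3 → MvPolynomial (Fin 3) ℝ)
    (hu : ∃ w₀ : Fin 3 → MvPolynomial (Fin 3) ℝ,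
      (∀ i, (w₀ i).totalDegree ≤ ℓ) ∧ u = pcurl3 w₀) :
    ∃! v : Fin 3 → MvPolynomial (Fin 3) ℝ,
      (∀ i, (v i).totalDegree ≤ ℓ) ∧
      (∀ (x : Fin 3 → ℝ) (i : Fin 3), eval x (pcurl3 v i) = eval x (u i)) ∧
      (∀ q : MvPolynomial (Fin 3) ℝ, q.totalDegree ≤ ℓ + 1 →
        (∫ x in T, ∑ i, eval x (v i) * eval x (pderiv i q)) = 0) := by
  classical
  obtain ⟨w₀, hw₀deg, rfl⟩ := hu
  have pc0 : ∀ w : Fin 3 → P3, pcurl3 w 0 = pderiv 1 (w 2) - pderiv 2 (w 1) := fun w => rfl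
  have pc1 : ∀ w : Fin 3 → P3, pcurl3 w 1 = pderiv 2 (w 0) - pderiv 0 (w 2) := fun w => rfl
  have pc2 : ∀ w : Fin 3 → P3, pcurl3 w 2 = pderiv 0 (w 1) - pderiv 1 (w 0) := fun w => rfl
  let ι : E3 ℓ → (Fin 3 → P3) := fun z i => (z i : P3)
  -- the inner product structure
  let core : InnerProductSpace.Core ℝ (E3 ℓ) :=
    { inner := fun x y => Bform T (ι x) (ι y)
      conj_inner_symm := fun x y => by
        simp only [starRingEnd_apply, star_trivial]
        exact Bform_symm T _ _
      re_inner_nonneg := fun x => by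
        simp only [RCLike.re_to_real]
        apply setIntegral_nonneg hopen.measurableSet
        intro y _
        exact Finset.sum_nonneg fun i _ => mul_self_nonneg _
      add_left := fun x y z => by
        have : ι (x + y) = ι x + ι y := rfl
        show Bform T (ι (x + y)) (ι z) = Bform T (ι x) (ι z) + Bform T (ι y) (ι z)
        rw [this]
        exact Bform_add_left T hbdd _ _ _
      smul_left := fun x y r => by
        have : ι (r • x) = r • ι x := rfl
        show Bform T (ι (r • x)) (ι y) = (starRingEnd ℝ) r * Bform T (ι x) (ι y)
        rw [this, starRingEnd_apply, star_trivial]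
        exact Bform_smul_left T r _ _
      definite := fun x hx => by
        have h0 : ι x = 0 := definite_aux T hne hopen hbdd (ι x) hx
        funext i
        exact Subtype.ext (congrFun h0 i) }
  -- the gradient subspace
  let Φ : restrictTotalDegree (Fin 3) ℝ (ℓ + 1) →ₗ[ℝ] E3 ℓ :=
    { toFun := fun q i => ⟨pderiv i (q : P3), by
        rw [mem_restrictTotalDegree]
        exact totalDegree_pderiv_le _ i ℓ ((mem_restrictTotalDegree _ _ _).1 q.2)⟩
      map_add' := fun q r => by
        funext i
        apply Subtype.ext
        show pderiv i ((q + r : restrictTotalDegree (Fin 3) ℝ (ℓ+1)) : P3)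
          = pderiv i (q : P3) + pderiv i (r : P3)
        rw [Submodule.coe_add, map_add]
      map_smul' := fun c q => by
        funext i
        apply Subtype.ext
        show pderiv i ((c • q : restrictTotalDegree (Fin 3) ℝ (ℓ+1)) : P3)
          = c • pderiv i (q : P3)
        rw [Submodule.coe_smul, Derivation.map_smul] }
  set G : Submodule ℝ (E3 ℓ) := LinearMap.range Φ with hG
  obtain ⟨y, hyG, z, hzG, hdecomp⟩ := ortho_decomp core G (fun i =>
    ⟨w₀ i, (mem_restrictTotalDegree _ _ _).2 (hw₀deg i)⟩ : E3 ℓ)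
  obtain ⟨qy, hqy⟩ := hyG
  -- the components of z
  have hz_eq : ∀ i, ι z i = w₀ i - pderiv i (qy : P3) := by
    intro i
    have h1 := congrFun hdecomp i
    have h2 : w₀ i = ι y i + ι z i := congrArg Subtype.val h1
    have h3 : ι y i = pderiv i (qy : P3) := by rw [← hqy]; rfl
    rw [h2, h3]; ring
  -- curl is preserved
  have hcurlz : ∀ i, pcurl3 (ι z) i = pcurl3 w₀ i := by
    have h0 : pcurl3 (ι z) 0 = pcurl3 w₀ 0 := by
      rw [pc0, pc0, hz_eq 1, hz_eq 2, map_sub, map_sub, pderiv_comm' (qy : P3) 1 2]; ring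
    have h1 : pcurl3 (ι z) 1 = pcurl3 w₀ 1 := by
      rw [pc1, pc1, hz_eq 0, hz_eq 2, map_sub, map_sub, pderiv_comm' (qy : P3) 2 0]; ring
    have h2 : pcurl3 (ι z) 2 = pcurl3 w₀ 2 := by
      rw [pc2, pc2, hz_eq 0, hz_eq 1, map_sub, map_sub, pderiv_comm' (qy : P3) 0 1]; ring
    intro i
    fin_cases i
    · exact h0
    · exact h1
    · exact h2
  refine ⟨ι z, ⟨?_, ?_, ?_⟩, ?_⟩
  · intro i
    exact (mem_restrictTotalDegree _ _ _).1 (z i).2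
  · intro x i
    rw [hcurlz i]
  · -- orthogonality
    intro q hq
    have hmem : Φ ⟨q, (mem_restrictTotalDegree _ _ _).2 hq⟩ ∈ G := LinearMap.mem_range_self _ _
    have h0 := hzG _ hmem
    have h1 : core.inner (Φ ⟨q, (mem_restrictTotalDegree _ _ _).2 hq⟩) z
        = Bform T (fun i => pderiv i q) (ι z) := rfl
    rw [h1, Bform_symm] at h0
    exact h0
  · -- uniqueness
    rintro v' ⟨h1', h2', h3'⟩
    set z' : E3 ℓ := fun i => ⟨v' i, (mem_restrictTotalDegree _ _ _).2 (h1' i)⟩ with hz'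
    have hz'G : ∀ u ∈ G, core.inner u z' = 0 := by
      rintro u' ⟨q, rfl⟩
      have h1 : core.inner (Φ q) z' = Bform T (fun i => pderiv i (q : P3)) v' := rfl
      rw [h1, Bform_symm]
      exact h3' (q : P3) ((mem_restrictTotalDegree _ _ _).1 q.2)
    -- curl of the difference vanishes
    have hcurl_eq : ∀ i, pcurl3 (ι z) i = pcurl3 v' i := by
      intro i
      apply MvPolynomial.funext
      intro x
      rw [hcurlz i]
      exact (h2' x i).symm
    have hsym : ∀ i j, pderiv i ((ι z - v') j) = pderiv j ((ι z - v') i) := by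
      have c0 := hcurl_eq 0
      have c1 := hcurl_eq 1
      have c2 := hcurl_eq 2
      rw [pc0, pc0] at c0
      rw [pc1, pc1] at c1
      rw [pc2, pc2] at c2
      have g12 : pderiv (1 : Fin 3) ((ι z - v') 2) = pderiv 2 ((ι z - v') 1) := by
        simp only [Pi.sub_apply, map_sub]; linear_combination c0
      have g20 : pderiv (2 : Fin 3) ((ι z - v') 0) = pderiv 0 ((ι z - v') 2) := by
        simp only [Pi.sub_apply, map_sub]; linear_combination c1
      have g01 : pderiv (0 : Fin 3) ((ι z - v') 1) = pderiv 1 ((ι z - v') 0) := by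
        simp only [Pi.sub_apply, map_sub]; linear_combination c2
      intro i j
      fin_cases i <;> fin_cases j
      · rfl
      · exact g01
      · exact g20.symm
      · exact g01.symm
      · rfl
      · exact g12
      · exact g20
      · exact g12.symm
      · rfl
    obtain ⟨q₀, hq₀deg, hq₀⟩ := poincare ℓ (ι z - v')
      (fun i => by
        have hd1 := (mem_restrictTotalDegree _ _ _).1 (z i).2
        have hd2 := h1' i
        calc ((ι z - v') i).totalDegree = ((ι z) i - v' i).totalDegree := rfl
          _ ≤ max ((ι z) i).totalDegree (v' i).totalDegree :=
              MvPolynomial.totalDegree_sub _ _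
          _ ≤ ℓ := max_le hd1 hd2)
      hsym
    have hdiffG : z - z' ∈ G := by
      refine ⟨⟨q₀, (mem_restrictTotalDegree _ _ _).2 hq₀deg⟩, ?_⟩
      funext i
      apply Subtype.ext
      show pderiv i q₀ = ((z - z') i : P3)
      rw [hq₀ i]
      rfl
    have hz_sub : ∀ u ∈ G, core.inner u (z - z') = 0 := by
      intro u' hu'
      have hι : ι (z - z') = ι z - ι z' := rfl
      have h1 : core.inner u' (z - z') = Bform T (ι u') (ι (z - z')) := rfl
      rw [h1, hι, Bform_sub_right T hbdd]
      have h2 := hzG u' hu'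
      have h3 := hz'G u' hu'
      have h4 : core.inner u' z = Bform T (ι u') (ι z) := rfl
      have h5 : core.inner u' z' = Bform T (ι u') (ι z') := rfl
      rw [h4] at h2
      rw [h5] at h3
      rw [h2, h3]
      ring
    have hzero : z - z' = 0 := ortho_zero core G (z - z') hz_sub hdiffG
    have hzz : z' = z := by
      have := sub_eq_zero.1 hzero
      exact this.symm
    funext i
    have : z' i = z i := congrFun hzz i
    exact congrArg Subtype.val this
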